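/- Let D be a triangulated category with a t-structure with heart A and let X, Y ∈ A, n ≥ 2. A morphism f : X → Σ^n(Y) in D lies in the image of the canonical map θ^n_{X,Y} : Yext^n_A(X,Y) → Hom_D(X, Σ^n(Y)) if and only if f admits a factorization X → Σ(X_1) → Σ^2(X_2) → ⋯ → Σ^{n-1}(X_{n-1}) → Σ^n(Y) with each X_i an object of A. -/

import Mathlib

open CategoryTheory Category Limits Pretriangulated Triangulated ZeroObject

namespace HRS

variable (A : Type*) [Category A] [Abelian A]

/-- A short exact sequence `0 ⟶ Y ⟶ E ⟶ X ⟶ 0` in `A`, i.e. an extension of `X` by `Y`. -/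
structure SES (X Y : A) where
  E : A
  i : Y ⟶ E
  p : E ⟶ X
  w : i ≫ p = 0
  ex : (ShortComplex.mk i p w).ShortExact

/-- A torsion pair `(T, F)` in the abelian category `A`. -/
structure TorsionPair (T F : A → Prop) : Prop where
  hom_zero : ∀ ⦃t f : A⦄, T t → F f → ∀ (g : t ⟶ f), g = 0
  exists_ses : ∀ X : A, ∃ (t f : A) (i : t ⟶ X) (p : X ⟶ f) (w : i ≫ p = 0),
    T t ∧ F f ∧ (ShortComplex.mk i p w).ShortExact

/-- `n`-fold Yoneda extensions of `X` by `Y`, presented as iterated splices of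
short exact sequences. -/
inductive ExtSeq : ℕ → A → A → Type _
  | base {X Y : A} (s : SES A X Y) : ExtSeq 1 X Y
  | splice {n : ℕ} {X Y Z : A} (s : SES A Z Y) (ξ : ExtSeq n X Z) : ExtSeq (n + 1) X Y

/-- Morphisms of Yoneda extensions over a pair of morphisms on the two end terms. -/
inductive ExtHom : ∀ {n : ℕ} {X X' Y Y' : A}, (Y ⟶ Y') → (X ⟶ X') →
    ExtSeq A n X Y → ExtSeq A n X' Y' → Prop
  | base {X X' Y Y' : A} {a : Y ⟶ Y'} {b : X ⟶ X'} (s : SES A X Y) (s' : SES A X' Y')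
      (e : s.E ⟶ s'.E) (h1 : s.i ≫ e = a ≫ s'.i) (h2 : s.p ≫ b = e ≫ s'.p) :
      ExtHom a b (.base s) (.base s')
  | splice {n : ℕ} {X X' Y Y' Z Z' : A} {a : Y ⟶ Y'} {b : X ⟶ X'} (t : Z ⟶ Z')
      (s : SES A Z Y) (s' : SES A Z' Y') (ξ : ExtSeq A n X Z) (ξ' : ExtSeq A n X' Z')
      (e : s.E ⟶ s'.E) (h1 : s.i ≫ e = a ≫ s'.i) (h2 : s.p ≫ t = e ≫ s'.p)
      (h : ExtHom t b ξ ξ') :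
      ExtHom a b (.splice s ξ) (.splice s' ξ')

/-- The Yoneda equivalence relation on `n`-fold extensions of `X` by `Y`: the equivalence
relation generated by the existence of a morphism of extensions which is the identity
on both end terms. -/
def ExtEquiv {n : ℕ} {X Y : A} (ξ ξ' : ExtSeq A n X Y) : Prop :=
  Relation.EqvGen (fun ζ ζ' => ExtHom A (𝟙 Y) (𝟙 X) ζ ζ') ξ ξ'

/-- The `n`-th Yoneda extension group (as a set) `Yext^n_A(X, Y)`. -/
def Yext (n : ℕ) (X Y : A) : Type _ :=
  Quot (fun ξ ξ' : ExtSeq A n X Y => ExtHom A (𝟙 Y) (𝟙 X) ξ ξ')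

/-- The class of an extension in `Yext`. -/
def Yext.mk {n : ℕ} {X Y : A} (ξ : ExtSeq A n X Y) : Yext A n X Y := Quot.mk _ ξ

/-- The short exact sequence `0 ⟶ Y ⟶ Y ⟶ 0 ⟶ 0`. -/
noncomputable def sesToZero (Y : A) : SES A (0 : A) Y where
  E := Y
  i := 𝟙 Y
  p := 0
  w := by simp
  ex := (ShortComplex.Splitting.shortExact
    { r := 𝟙 Y
      s := 0
      f_r := by simp
      s_g := by apply Subsingleton.elim
      id := by simp })

/-- The short exact sequence `0 ⟶ 0 ⟶ 0 ⟶ 0 ⟶ 0`. -/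
noncomputable def sesZero : SES A (0 : A) (0 : A) where
  E := 0
  i := 0
  p := 0
  w := by simp
  ex := (ShortComplex.Splitting.shortExact
    { r := 0
      s := 0
      f_r := by apply Subsingleton.elim
      s_g := by apply Subsingleton.elim
      id := by apply Subsingleton.elim })

/-- The short exact sequence `0 ⟶ 0 ⟶ X ⟶ X ⟶ 0`. -/
noncomputable def sesFromZero (X : A) : SES A X (0 : A) where
  E := X
  i := 0
  p := 𝟙 X
  w := by simp
  ex := (ShortComplex.Splitting.shortExact
    { r := 0
      s := 𝟙 X
      f_r := by apply Subsingleton.elim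
      s_g := by simp
      id := by simp })

/-- The trivial 3-fold extension `0 → Y → Y → 0 → X → X → 0`, representing the zero
class in `Yext^3_A(X, Y)`. -/
noncomputable def trivialExt3 (X Y : A) : ExtSeq A 3 X Y :=
  ExtSeq.splice (sesToZero A Y) (ExtSeq.splice (sesZero A) (ExtSeq.base (sesFromZero A X)))

/-- `Sub P`: subobjects of objects satisfying `P`. -/
def SubP (P : A → Prop) (X : A) : Prop := ∃ (U : A) (m : X ⟶ U), P U ∧ Mono m

/-- `Fac P`: quotient objects of objects satisfying `P`. -/
def FacP (P : A → Prop) (X : A) : Prop := ∃ (U : A) (p : U ⟶ X), P U ∧ Epi p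

/-- `P * Q`: objects that are extensions of an object satisfying `Q` by one satisfying `P`. -/
def StarP (P Q : A → Prop) (X : A) : Prop :=
  ∃ (u v : A) (i : u ⟶ X) (p : X ⟶ v) (w : i ≫ p = 0),
    P u ∧ Q v ∧ (ShortComplex.mk i p w).ShortExact

variable (D : Type*) [Category D] [HasZeroObject D] [Preadditive D] [HasShift D ℤ]
  [∀ n : ℤ, (shiftFunctor D n).Additive] [Pretriangulated D]

/-- The heart of a t-structure, as a predicate on objects. -/
def heartProp (t : TStructure D) (X : D) : Prop := t.le 0 X ∧ t.ge 0 X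

/-- A t-structure is bounded if every object lies in some `Σ^i D^{≤0} ∩ Σ^j D^{≥0}`. -/
def IsBoundedTStructure (t : TStructure D) : Prop := ∀ X : D, ∃ a b : ℤ, t.ge a X ∧ t.le b X

/-- Data realizing an abelian category `A` as the heart of a t-structure `t` on `D`:
a fully faithful additive functor `A ⥤ D` whose essential image is the heart of `t`. -/
structure HeartData (t : TStructure D) where
  ι : A ⥤ D
  additive : ι.Additive
  full : ι.Full
  faithful : ι.Faithful
  essImage_iff : ∀ X : D, ι.essImage X ↔ heartProp D t X

variable {A D}

/-- The property, for a family `θ` of maps from `n`-fold Yoneda extensions in the heart to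
`Hom_D(X, Σ^n Y)`, of being the canonical family: it descends to the Yoneda extension
groups, `θ^1` sends a short exact sequence to the connecting morphism of an associated
distinguished triangle, and `θ^{n+1}` is computed on splices by `Σ^n(θ^1 ξ₁) ∘ θ^n ξ₂`. -/
structure IsCanThetaFamily {t : TStructure D} (h : HeartData A D t)
    (θ : ∀ (n : ℕ) (X Y : A), ExtSeq A n X Y → (h.ι.obj X ⟶ (h.ι.obj Y)⟦(n : ℤ)⟧)) : Prop where
  compat : ∀ {n : ℕ} {X Y : A} (ξ ξ' : ExtSeq A n X Y), ExtEquiv A ξ ξ' →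
    θ n X Y ξ = θ n X Y ξ'
  base : ∀ {X Y : A} (s : SES A X Y),
    Triangle.mk (h.ι.map s.i) (h.ι.map s.p)
      (θ 1 X Y (.base s) ≫ eqToHom (by norm_num)) ∈ distTriang D
  splice : ∀ {n : ℕ} {X Y Z : A} (s : SES A Z Y) (ξ : ExtSeq A n X Z),
    θ (n + 1) X Y (.splice s ξ) = θ n X Z ξ ≫ (θ 1 Z Y (.base s))⟦(n : ℤ)⟧' ≫
      (shiftFunctorAdd' D ((1 : ℕ) : ℤ) ((n : ℕ) : ℤ) (((n + 1 : ℕ)) : ℤ)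
        (by push_cast; ring)).inv.app (h.ι.obj Y)

/-- The map induced by `θ^n` on the Yoneda extension group `Yext^n(X, Y)`. -/
def thetaBar {t : TStructure D} {h : HeartData A D t}
    (θ : ∀ (n : ℕ) (X Y : A), ExtSeq A n X Y → (h.ι.obj X ⟶ (h.ι.obj Y)⟦(n : ℤ)⟧))
    (hθ : IsCanThetaFamily h θ) (n : ℕ) (X Y : A) :
    Yext A n X Y → (h.ι.obj X ⟶ (h.ι.obj Y)⟦(n : ℤ)⟧) :=
  Quot.lift (θ n X Y) (fun ξ ξ' hr => hθ.compat ξ ξ' (Relation.EqvGen.rel _ _ hr))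

variable (A D)

/-- The image of a short exact sequence under an exact functor. -/
def mapSES {A' : Type*} [Category A'] [Abelian A'] (G : A' ⥤ A) [G.Additive]
    (hG : ∀ S : ShortComplex A', S.ShortExact → (S.map G).ShortExact)
    {X Y : A'} (s : SES A' X Y) : SES A (G.obj X) (G.obj Y) where
  E := G.obj s.E
  i := G.map s.i
  p := G.map s.p
  w := by rw [← G.map_comp, s.w]; exact G.map_zero _ _
  ex := hG _ s.ex

/-- The image of a Yoneda extension under an exact functor. -/
def mapExtSeq {A' : Type*} [Category A'] [Abelian A'] (G : A' ⥤ A) [G.Additive]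
    (hG : ∀ S : ShortComplex A', S.ShortExact → (S.map G).ShortExact) :
    ∀ {n : ℕ} {X Y : A'}, ExtSeq A' n X Y → ExtSeq A n (G.obj X) (G.obj Y)
  | _, _, _, .base s => .base (mapSES A G hG s)
  | _, _, _, .splice s ξ => .splice (mapSES A G hG s) (mapExtSeq G hG ξ)

/-- Composition of a chain of morphisms `Σ^i X_i ⟶ Σ^{i+1} X_{i+1}` in `D`,
with all `X_i` in the heart. -/
def chainComp (ι : A ⥤ D) (obj : ℕ → A)
    (g : ∀ i : ℕ, ((ι.obj (obj i))⟦((i : ℕ) : ℤ)⟧ ⟶ (ι.obj (obj (i + 1)))⟦(((i + 1 : ℕ)) : ℤ)⟧)) :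
    ∀ n : ℕ, ((ι.obj (obj 0))⟦((0 : ℕ) : ℤ)⟧ ⟶ (ι.obj (obj n))⟦((n : ℕ) : ℤ)⟧)
  | 0 => 𝟙 _
  | n + 1 => chainComp ι obj g n ≫ g n

/-- A model of the bounded derived category `D^b(A)` of an abelian category `A`:
a triangulated category equipped with a bounded t-structure whose heart is `A`,
such that the canonical maps `Yext^n_A(X, Y) → Hom(X, Σ^n Y)` are bijective for all
`n ≥ 1` (the characteristic-class isomorphisms of the bounded derived category). -/
structure DerivedData where
  t : TStructure D
  bounded : IsBoundedTStructure D t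
  heart : HeartData A D t
  θ : ∀ (n : ℕ) (X Y : A), ExtSeq A n X Y → (heart.ι.obj X ⟶ (heart.ι.obj Y)⟦(n : ℤ)⟧)
  can : IsCanThetaFamily heart θ
  bij : ∀ (n : ℕ), 1 ≤ n → ∀ (X Y : A), Function.Bijective (thetaBar θ can n X Y)

variable {A D}

/-- Membership in the HRS-tilt `B = Σ(F) * T` of `A` with respect to a torsion pair
`(T, F)`, for an object of (a model of) `D^b(A)`. -/
def HRSTiltMem {t : TStructure D} (h : HeartData A D t) (T F : A → Prop) (X : D) : Prop :=
  ∃ (f tt : A), F f ∧ T tt ∧ ∃ (g : (h.ι.obj f)⟦(1 : ℤ)⟧ ⟶ X) (g' : X ⟶ h.ι.obj tt)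
    (δ : h.ι.obj tt ⟶ ((h.ι.obj f)⟦(1 : ℤ)⟧)⟦(1 : ℤ)⟧), Triangle.mk g g' δ ∈ distTriang D


section Aux

variable {A : Type*} [Category A] [Abelian A]
  {D : Type*} [Category D] [HasZeroObject D] [Preadditive D] [HasShift D ℤ]
  [∀ n : ℤ, (shiftFunctor D n).Additive] [Pretriangulated D]

lemma tzero (t : TStructure D) {X Y : D} (f : X ⟶ Y) {a b : ℤ} (hab : a < b)
    (hX : t.le a X) (hY : t.ge b Y) : f = 0 := by
  have h1 : t.le 0 (X⟦a⟧) := t.le_shift a a 0 (by omega) X hX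
  have h2 : t.ge (b - a) (Y⟦a⟧) := t.ge_shift b a (b - a) (by omega) Y hY
  have h3 : t.ge 1 (Y⟦a⟧) := t.ge_antitone (by omega) _ h2
  have h4 := t.zero' (f⟦a⟧') h1 h3
  apply (shiftFunctor D a).map_injective
  rw [h4, Functor.map_zero]

lemma heart_ext (t : TStructure D) (T : Triangle D) (hT : T ∈ distTriang D)
    (h1 : heartProp D t T.obj₁) (h3 : heartProp D t T.obj₃) : heartProp D t T.obj₂ := by
  constructor
  · obtain ⟨P, Q, hP, hQ, u, v, w, mem⟩ := t.exists_triangle T.obj₂ 0 1 rfl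
    have hv : v = 0 := by
      obtain ⟨k, hk⟩ := Triangle.yoneda_exact₂ T hT v (tzero t _ (by omega) h1.1 hQ)
      rw [hk, tzero t k (by omega) h3.1 hQ, comp_zero]
    have hQ0 : IsZero Q := by
      obtain ⟨k, hk⟩ := Triangle.yoneda_exact₃ (Triangle.mk u v w) mem (𝟙 Q) (by show v ≫ 𝟙 Q = 0; rw [hv, zero_comp])
      rw [IsZero.iff_id_eq_zero, hk,
        tzero t k (by omega) (t.le_shift 0 1 (-1) (by omega) P hP) hQ, comp_zero]
      rfl
    have : IsIso u := (Triangle.isZero₃_iff_isIso₁ _ mem).1 hQ0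
    exact (t.le 0).prop_of_iso (asIso u) hP
  · obtain ⟨P, Q, hP, hQ, u, v, w, mem⟩ := t.exists_triangle T.obj₂ (-1) 0 (by omega)
    have hu : u = 0 := by
      obtain ⟨k, hk⟩ := Triangle.coyoneda_exact₂ T hT u (tzero t _ (by omega) hP h3.2)
      rw [hk, tzero t k (by omega) hP h1.2, zero_comp]
    have hP0 : IsZero P := by
      obtain ⟨k, hk⟩ := Triangle.coyoneda_exact₁ (Triangle.mk u v w) mem (𝟙 (P⟦(1:ℤ)⟧))
        (by show 𝟙 (P⟦(1:ℤ)⟧) ≫ u⟦(1:ℤ)⟧' = 0; rw [hu, Functor.map_zero, comp_zero])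
      have hz : IsZero (P⟦(1:ℤ)⟧) := by
        rw [IsZero.iff_id_eq_zero, hk,
          tzero t k (by omega) (t.le_shift (-1) 1 (-2) (by omega) P hP) hQ, zero_comp]
        rfl
      have hz2 : IsZero ((P⟦(1:ℤ)⟧)⟦(-1:ℤ)⟧) := (shiftFunctor D (-1:ℤ)).map_isZero hz
      exact hz2.of_iso ((shiftFunctorCompIsoId D (1:ℤ) (-1:ℤ) (by omega)).app P).symm
    have : IsIso v := (Triangle.isZero₁_iff_isIso₂ _ mem).1 hP0
    exact (t.ge 0).prop_of_iso (asIso v).symm hQ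

lemma heart_obj {t : TStructure D} (h : HeartData A D t) (X : A) :
    heartProp D t (h.ι.obj X) :=
  (h.essImage_iff _).1 ⟨X, ⟨Iso.refl _⟩⟩

lemma theta1_surj {t : TStructure D} (h : HeartData A D t)
    (θ : ∀ (n : ℕ) (X Y : A), ExtSeq A n X Y → (h.ι.obj X ⟶ (h.ι.obj Y)⟦(n : ℤ)⟧))
    (hθ : IsCanThetaFamily h θ) (X Y : A)
    (δ : h.ι.obj X ⟶ (h.ι.obj Y)⟦((1 : ℕ) : ℤ)⟧) :
    ∃ s : SES A X Y, θ 1 X Y (.base s) = δ := by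
  haveI := h.full
  haveI := h.faithful
  have heartX := heart_obj h X
  have heartY := heart_obj h Y
  have hcast : ((h.ι.obj Y)⟦((1 : ℕ) : ℤ)⟧ : D) = (h.ι.obj Y)⟦(1 : ℤ)⟧ := by norm_num
  set δ' : h.ι.obj X ⟶ (h.ι.obj Y)⟦(1 : ℤ)⟧ := δ ≫ eqToHom hcast with hδ'
  obtain ⟨E, a, b, hT⟩ := distinguished_cocone_triangle₂ δ'
  have hE : heartProp D t E := heart_ext t _ hT heartY heartX
  obtain ⟨E₀, ⟨e⟩⟩ := (h.essImage_iff E).2 hE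
  set i : Y ⟶ E₀ := h.ι.preimage (a ≫ e.inv) with hi0
  set p : E₀ ⟶ X := h.ι.preimage (e.hom ≫ b) with hp0
  have hi : h.ι.map i = a ≫ e.inv := h.ι.map_preimage _
  have hp : h.ι.map p = e.hom ≫ b := h.ι.map_preimage _
  have hT' : Triangle.mk (h.ι.map i) (h.ι.map p) δ' ∈ distTriang D := by
    refine isomorphic_distinguished _ hT _ ?_
    exact Triangle.isoMk _ _ (Iso.refl _) e (Iso.refl _)
      (by show h.ι.map i ≫ e.hom = 𝟙 (h.ι.obj Y) ≫ a; simp [hi])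
      (by show h.ι.map p ≫ 𝟙 (h.ι.obj X) = e.hom ≫ b; simp [hp])
      (by show δ' ≫ (shiftFunctor D (1:ℤ)).map (𝟙 (h.ι.obj Y)) = 𝟙 (h.ι.obj X) ≫ δ'; simp)
  have hw : i ≫ p = 0 := by
    apply h.ι.map_injective
    rw [Functor.map_comp, hi, hp, Functor.map_zero]
    rw [assoc, Iso.inv_hom_id_assoc]
    exact comp_distTriang_mor_zero₁₂ _ hT
  have hmono : Mono i := by
    apply Preadditive.mono_of_cancel_zero
    intro W k hk
    apply h.ι.map_injective
    rw [Functor.map_zero]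
    obtain ⟨l, hl⟩ := Triangle.coyoneda_exact₂ _ (inv_rot_of_distTriang _ hT') (h.ι.map k)
      (by show h.ι.map k ≫ h.ι.map i = 0; rw [← Functor.map_comp, hk, Functor.map_zero])
    rw [hl, tzero t l (show (0:ℤ) < 1 by omega) (heart_obj h W).1
      (t.ge_shift 0 (-1) 1 (by omega) _ heartX.2), zero_comp]
    rfl
  have hepi : Epi p := by
    apply Preadditive.epi_of_cancel_zero
    intro W k hk
    apply h.ι.map_injective
    rw [Functor.map_zero]
    obtain ⟨l, hl⟩ := Triangle.yoneda_exact₃ _ hT' (h.ι.map k)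
      (by show h.ι.map p ≫ h.ι.map k = 0; rw [← Functor.map_comp, hk, Functor.map_zero])
    rw [hl, tzero t l (show (-1:ℤ) < 0 by omega)
      (t.le_shift 0 1 (-1) (by omega) _ heartY.1) (heart_obj h W).2, comp_zero]
    rfl
  have hex : (ShortComplex.mk i p hw).Exact := by
    apply ShortComplex.exact_of_f_is_kernel
    exact KernelFork.IsLimit.ofι' i hw (fun {W} k hk => by
      have hk' : h.ι.map k ≫ (Triangle.mk (h.ι.map i) (h.ι.map p) δ').mor₂ = 0 := by
        show h.ι.map k ≫ h.ι.map p = 0; rw [← Functor.map_comp, hk, Functor.map_zero]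
      refine ⟨h.ι.preimage (Triangle.coyoneda_exact₂ _ hT' (h.ι.map k) hk').choose, ?_⟩
      apply h.ι.map_injective
      rw [Functor.map_comp, h.ι.map_preimage (Triangle.coyoneda_exact₂ _ hT' (h.ι.map k) hk').choose]
      exact (Triangle.coyoneda_exact₂ _ hT' (h.ι.map k) hk').choose_spec.symm)
  set s : SES A X Y := ⟨E₀, i, p, hw, { exact := hex, mono_f := hmono, epi_g := hepi }⟩ with hs
  refine ⟨s, ?_⟩
  have hTθ := hθ.base s
  obtain ⟨c, hc1, hc2⟩ := complete_distinguished_triangle_morphism _ _ hTθ hT'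
    (𝟙 _) (𝟙 _) (by show h.ι.map i ≫ 𝟙 (h.ι.obj E₀) = 𝟙 (h.ι.obj Y) ≫ h.ι.map i; simp)
  change h.ι.obj X ⟶ h.ι.obj X at c
  dsimp at hc1 hc2
  change h.ι.map p ≫ c = 𝟙 (h.ι.obj E₀) ≫ h.ι.map p at hc1
  change (θ 1 X Y (.base s) ≫ 𝟙 _) ≫ (shiftFunctor D (1:ℤ)).map (𝟙 (h.ι.obj Y)) = c ≫ δ' at hc2
  simp only [id_comp, comp_id, Functor.map_id] at hc1 hc2
  have hzz : h.ι.map p ≫ (c - 𝟙 (h.ι.obj X)) = 0 := by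
    rw [Preadditive.comp_sub, hc1, comp_id, sub_self]
  obtain ⟨l, hl⟩ := Triangle.yoneda_exact₃ _ hT' (c - 𝟙 (h.ι.obj X)) hzz
  change (h.ι.obj Y)⟦(1:ℤ)⟧ ⟶ h.ι.obj X at l
  change c - 𝟙 (h.ι.obj X) = δ' ≫ l at hl
  rw [tzero t l (show (-1:ℤ) < 0 by omega)
    (t.le_shift 0 1 (-1) (by omega) _ heartY.1) heartX.2, comp_zero, sub_eq_zero] at hl
  rw [hl, id_comp] at hc2
  have final : θ 1 X Y (ExtSeq.base s) ≫ eqToHom hcast = δ ≫ eqToHom hcast := by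
    rw [← hδ', ← hc2]
    simp
  simpa using congrArg (fun q => q ≫ eqToHom hcast.symm) final

lemma chainComp_zero (ι : A ⥤ D) (obj : ℕ → A)
    (g : ∀ i : ℕ, ((ι.obj (obj i))⟦((i : ℕ) : ℤ)⟧ ⟶ (ι.obj (obj (i + 1)))⟦(((i + 1 : ℕ)) : ℤ)⟧)) :
    chainComp A D ι obj g 0 = 𝟙 _ := rfl

lemma chainComp_succ (ι : A ⥤ D) (obj : ℕ → A)
    (g : ∀ i : ℕ, ((ι.obj (obj i))⟦((i : ℕ) : ℤ)⟧ ⟶ (ι.obj (obj (i + 1)))⟦(((i + 1 : ℕ)) : ℤ)⟧))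
    (k : ℕ) :
    chainComp A D ι obj g (k + 1) = chainComp A D ι obj g k ≫ g k := rfl

lemma chainComp_one (ι : A ⥤ D) (obj : ℕ → A)
    (g : ∀ i : ℕ, ((ι.obj (obj i))⟦((i : ℕ) : ℤ)⟧ ⟶ (ι.obj (obj (i + 1)))⟦(((i + 1 : ℕ)) : ℤ)⟧)) :
    chainComp A D ι obj g 1 = 𝟙 _ ≫ g 0 := rfl

lemma chainComp_congr (ι : A ⥤ D) (obj obj' : ℕ → A)
    (g : ∀ i : ℕ, ((ι.obj (obj i))⟦((i : ℕ) : ℤ)⟧ ⟶ (ι.obj (obj (i + 1)))⟦(((i + 1 : ℕ)) : ℤ)⟧))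
    (g' : ∀ i : ℕ, ((ι.obj (obj' i))⟦((i : ℕ) : ℤ)⟧ ⟶ (ι.obj (obj' (i + 1)))⟦(((i + 1 : ℕ)) : ℤ)⟧))
    (m : ℕ) (hobj : ∀ i, i ≤ m → obj i = obj' i)
    (hg : ∀ i (hi : i < m), g i ≫ eqToHom (by rw [hobj (i+1) hi]) =
      eqToHom (by rw [hobj i hi.le]) ≫ g' i) :
    chainComp A D ι obj g m ≫ eqToHom (by rw [hobj m le_rfl]) =
      eqToHom (by rw [hobj 0 (Nat.zero_le m)]) ≫ chainComp A D ι obj' g' m := by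
  induction m with
  | zero => simp [chainComp_zero]
  | succ k ih =>
    have h1 := ih (fun i hi => hobj i (hi.trans (Nat.le_succ k)))
      (fun i hi => hg i (hi.trans_le (Nat.le_succ k)))
    rw [chainComp_succ, chainComp_succ, Category.assoc, hg k (Nat.lt_succ_self k),
      ← Category.assoc, h1, Category.assoc]

lemma forward_ext {t : TStructure D} (h : HeartData A D t)
    (θ : ∀ (n : ℕ) (X Y : A), ExtSeq A n X Y → (h.ι.obj X ⟶ (h.ι.obj Y)⟦(n : ℤ)⟧))
    (hθ : IsCanThetaFamily h θ) {n : ℕ} {X Y : A} (ξ : ExtSeq A n X Y) :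
    ∃ (obj : ℕ → A) (h0 : obj 0 = X) (hn' : obj n = Y)
      (g : ∀ i : ℕ, ((h.ι.obj (obj i))⟦((i : ℕ) : ℤ)⟧ ⟶
        (h.ι.obj (obj (i + 1)))⟦(((i + 1 : ℕ)) : ℤ)⟧)),
      θ n X Y ξ = (shiftFunctorZero D ℤ).inv.app (h.ι.obj X) ≫ eqToHom (by rw [h0]; norm_num) ≫
        chainComp A D h.ι obj g n ≫ eqToHom (by rw [hn']) := by
  induction ξ with
  | @base X Y s =>
    refine ⟨fun i => match i with | 0 => X | _+1 => Y, rfl, rfl,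
      fun i => match i with
        | 0 => eqToHom (by norm_num) ≫ (shiftFunctorZero D ℤ).hom.app (h.ι.obj X) ≫
            θ 1 X Y (.base s)
        | _+1 => 0, ?_⟩
    rw [chainComp_one]
    simp
  | @splice n X Y Z s ζ ih =>
    obtain ⟨obj', h0', hn'', g', hEq⟩ := ih
    classical
    set obj : ℕ → A := fun i => if i = n + 1 then Y else obj' i with hobjdef
    have hobj_le : ∀ i, i ≤ n → obj i = obj' i := fun i hi => if_neg (by omega)
    have hobj_top : obj (n+1) = Y := if_pos rfl
    refine ⟨obj, by rw [hobj_le 0 (Nat.zero_le n), h0'], hobj_top, fun i =>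
      if hi : i = n then
        eqToHom (by rw [hi, hobj_le n le_rfl, hn'']) ≫ (θ 1 Z Y (ExtSeq.base s))⟦(n : ℤ)⟧' ≫
          (shiftFunctorAdd' D ((1 : ℕ) : ℤ) ((n : ℕ) : ℤ) (((n + 1 : ℕ)) : ℤ)
            (by push_cast; ring)).inv.app (h.ι.obj Y) ≫ eqToHom (by rw [hi, hobj_top])
      else if hi' : i < n then
        eqToHom (by rw [hobj_le i (le_of_lt hi')]) ≫ g' i ≫
          eqToHom (by rw [hobj_le (i+1) hi']) else 0, ?_⟩
    have hcc := chainComp_congr h.ι obj obj'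
      (fun i =>
        if hi : i = n then
          eqToHom (by rw [hi, hobj_le n le_rfl, hn'']) ≫ (θ 1 Z Y (ExtSeq.base s))⟦(n : ℤ)⟧' ≫
            (shiftFunctorAdd' D ((1 : ℕ) : ℤ) ((n : ℕ) : ℤ) (((n + 1 : ℕ)) : ℤ)
              (by push_cast; ring)).inv.app (h.ι.obj Y) ≫ eqToHom (by rw [hi, hobj_top])
        else if hi' : i < n then
          eqToHom (by rw [hobj_le i (le_of_lt hi')]) ≫ g' i ≫
            eqToHom (by rw [hobj_le (i+1) hi']) else 0)
      g' n hobj_le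
      (fun i hi => by
        simp only [dif_neg (show ¬ i = n by omega), dif_pos hi]
        simp [eqToHom_trans])
    have chainEq : chainComp A D h.ι obj
        (fun i =>
          if hi : i = n then
            eqToHom (by rw [hi, hobj_le n le_rfl, hn'']) ≫ (θ 1 Z Y (ExtSeq.base s))⟦(n : ℤ)⟧' ≫
              (shiftFunctorAdd' D ((1 : ℕ) : ℤ) ((n : ℕ) : ℤ) (((n + 1 : ℕ)) : ℤ)
                (by push_cast; ring)).inv.app (h.ι.obj Y) ≫ eqToHom (by rw [hi, hobj_top])
          else if hi' : i < n then
            eqToHom (by rw [hobj_le i (le_of_lt hi')]) ≫ g' i ≫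
              eqToHom (by rw [hobj_le (i+1) hi']) else 0) n =
        eqToHom (by rw [hobj_le 0 (Nat.zero_le n)]) ≫ chainComp A D h.ι obj' g' n ≫
          eqToHom (by rw [hobj_le n le_rfl]) := by
      have h2 := congrArg
        (fun q => q ≫ eqToHom (show ((h.ι.obj (obj' n))⟦((n : ℕ) : ℤ)⟧ : D) =
          (h.ι.obj (obj n))⟦((n : ℕ) : ℤ)⟧ by rw [hobj_le n le_rfl])) hcc
      simpa [eqToHom_trans] using h2
    rw [hθ.splice s ζ, hEq, chainComp_succ, chainEq]
    simp [eqToHom_trans]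

lemma backward_ext {t : TStructure D} (h : HeartData A D t)
    (θ : ∀ (n : ℕ) (X Y : A), ExtSeq A n X Y → (h.ι.obj X ⟶ (h.ι.obj Y)⟦(n : ℤ)⟧))
    (hθ : IsCanThetaFamily h θ) :
    ∀ (n : ℕ), 1 ≤ n → ∀ (X Y : A) (obj : ℕ → A) (h0 : obj 0 = X) (hn' : obj n = Y)
      (g : ∀ i : ℕ, ((h.ι.obj (obj i))⟦((i : ℕ) : ℤ)⟧ ⟶
        (h.ι.obj (obj (i + 1)))⟦(((i + 1 : ℕ)) : ℤ)⟧)),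
      ∃ ξ : ExtSeq A n X Y, θ n X Y ξ =
        (shiftFunctorZero D ℤ).inv.app (h.ι.obj X) ≫ eqToHom (by rw [h0]; norm_num) ≫
          chainComp A D h.ι obj g n ≫ eqToHom (by rw [hn']) := by
  intro n
  induction n with
  | zero => omega
  | succ m ih =>
    intro _ X Y obj h0 hn' g
    by_cases hm : m = 0
    · subst hm
      obtain ⟨s, hs⟩ := theta1_surj h θ hθ X Y
        ((shiftFunctorZero D ℤ).inv.app (h.ι.obj X) ≫ eqToHom (by rw [h0]; norm_num) ≫
          chainComp A D h.ι obj g 1 ≫ eqToHom (by rw [hn']))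
      exact ⟨.base s, hs⟩
    · obtain ⟨ζ, hζ⟩ := ih (by omega) X (obj m) obj h0 rfl g
      obtain ⟨s, hs⟩ := theta1_surj h θ hθ (obj m) Y
        ((shiftFunctor D ((m : ℕ) : ℤ)).preimage ((g m ≫ eqToHom (by rw [hn'])) ≫
          (shiftFunctorAdd' D ((1 : ℕ) : ℤ) ((m : ℕ) : ℤ) (((m + 1 : ℕ)) : ℤ)
            (by push_cast; ring)).hom.app (h.ι.obj Y)))
      refine ⟨.splice s ζ, ?_⟩
      rw [hθ.splice s ζ, hζ, hs, Functor.map_preimage, chainComp_succ]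
      simp [eqToHom_trans]

end Aux

/-- A morphism `f : X → Σ^n Y` lies in the image of the canonical map
`θ^n` if and only if it factors as `X → Σ X₁ → Σ² X₂ → ⋯ → Σ^{n-1} X_{n-1} → Σ^n Y`
with all `Xᵢ` in the heart. -/
theorem statement_6 {A : Type*} [Category A] [Abelian A]
    {D : Type*} [Category D] [HasZeroObject D] [Preadditive D] [HasShift D ℤ]
    [∀ n : ℤ, (shiftFunctor D n).Additive] [Pretriangulated D]
    {t : TStructure D} (h : HeartData A D t)
    (θ : ∀ (n : ℕ) (X Y : A), ExtSeq A n X Y → (h.ι.obj X ⟶ (h.ι.obj Y)⟦(n : ℤ)⟧))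
    (hθ : IsCanThetaFamily h θ) (n : ℕ) (hn : 2 ≤ n) (X Y : A)
    (f : h.ι.obj X ⟶ (h.ι.obj Y)⟦(n : ℤ)⟧) :
    (∃ ξ : ExtSeq A n X Y, θ n X Y ξ = f) ↔
      ∃ (obj : ℕ → A) (h0 : obj 0 = X) (hn' : obj n = Y)
        (g : ∀ i : ℕ, ((h.ι.obj (obj i))⟦((i : ℕ) : ℤ)⟧ ⟶
          (h.ι.obj (obj (i + 1)))⟦(((i + 1 : ℕ)) : ℤ)⟧)),
        f = (shiftFunctorZero D ℤ).inv.app (h.ι.obj X) ≫ eqToHom (by rw [h0]; norm_num) ≫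
          chainComp A D h.ι obj g n ≫ eqToHom (by rw [hn']) := by
  constructor
  · rintro ⟨ξ, rfl⟩
    exact forward_ext h θ hθ ξ
  · rintro ⟨obj, h0, hn', g, rfl⟩
    exact backward_ext h θ hθ n (by omega) X Y obj h0 hn' g

end HRS
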